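/- Theorem 3 (zero angular momentum case, algebraic form): Let C ⊆ ℝ³ be a bounded measurable set of positive Lebesgue measure |C| > 0, let a > 0, γ > 1, let I_C be a symmetric positive definite real 3×3 matrix, m_B > 0, m_F > 0, and m_S := m_B + m_F. Suppose ρ_s : C → ℝ is integrable with ρ_s(x) > 0 for all x ∈ C and ∫_C ρ_s = m_F, and ω_s, ξ_s ∈ ℝ³, c ∈ ℝ satisfy: (i) ρ_s(x)^{γ−1} = ((γ−1)/(2aγ))·(‖ω_s × x‖² − 2·((ω_s × ξ_s)·x)) + c for all x ∈ C; (ii) m_S·ξ_s = −ω_s × g(ρ_s); (iii) I(ρ_s)·ω_s = 0 (vanishing total angular momentum M₀ = 0). Then ω_s = 0, ξ_s = 0, and ρ_s(x) = m_F/|C| for all x ∈ C. -/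

import Mathlib

open MeasureTheory Matrix
open scoped RealInnerProductSpace

noncomputable section

/-- The cross product on `ℝ³` (Euclidean space). -/
def cross3 (a b : EuclideanSpace ℝ (Fin 3)) : EuclideanSpace ℝ (Fin 3) :=
  WithLp.toLp 2 (crossProduct a b)

/-- `Ī(ρ) := ∫_C ρ(x)(‖x‖²·𝟙 − x ⊗ x) dx` (entrywise integral). -/
def Ibar (C : Set (EuclideanSpace ℝ (Fin 3))) (ρ : EuclideanSpace ℝ (Fin 3) → ℝ) :
    Matrix (Fin 3) (Fin 3) ℝ :=
  Matrix.of fun i j =>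
    ∫ x in C, ρ x * (‖x‖ ^ 2 * (if i = j then (1 : ℝ) else 0) - x i * x j)

/-- `g(ρ) := ∫_C ρ(x)·x dx`. -/
def gvec (C : Set (EuclideanSpace ℝ (Fin 3))) (ρ : EuclideanSpace ℝ (Fin 3) → ℝ) :
    EuclideanSpace ℝ (Fin 3) :=
  ∫ x in C, ρ x • x

/-- `I_g(ρ) := (1/m_S)·(‖g(ρ)‖²·𝟙 − g(ρ) ⊗ g(ρ))`. -/
def Ig (C : Set (EuclideanSpace ℝ (Fin 3))) (ρ : EuclideanSpace ℝ (Fin 3) → ℝ) (mS : ℝ) :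
    Matrix (Fin 3) (Fin 3) ℝ :=
  (1 / mS) • Matrix.of fun i j =>
    ‖gvec C ρ‖ ^ 2 * (if i = j then (1 : ℝ) else 0) - gvec C ρ i * gvec C ρ j

/-- `I(ρ) := I_C + Ī(ρ) − I_g(ρ)`, the central inertia tensor of the coupled system. -/
def Imat (IC : Matrix (Fin 3) (Fin 3) ℝ) (C : Set (EuclideanSpace ℝ (Fin 3)))
    (ρ : EuclideanSpace ℝ (Fin 3) → ℝ) (mS : ℝ) : Matrix (Fin 3) (Fin 3) ℝ :=
  IC + Ibar C ρ - Ig C ρ mS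

/- ### Auxiliary lemmas -/

lemma normsq3 (y : EuclideanSpace ℝ (Fin 3)) : ‖y‖ ^ 2 = y 0 ^ 2 + y 1 ^ 2 + y 2 ^ 2 := by
  rw [EuclideanSpace.norm_eq, Real.sq_sqrt (by positivity)]
  simp [Fin.sum_univ_three, sq_abs]

@[simp] lemma cross3_apply0 (v x : EuclideanSpace ℝ (Fin 3)) :
    cross3 v x 0 = v 1 * x 2 - v 2 * x 1 := by simp [cross3, crossProduct]

@[simp] lemma cross3_apply1 (v x : EuclideanSpace ℝ (Fin 3)) :
    cross3 v x 1 = v 2 * x 0 - v 0 * x 2 := by simp [cross3, crossProduct]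

@[simp] lemma cross3_apply2 (v x : EuclideanSpace ℝ (Fin 3)) :
    cross3 v x 2 = v 0 * x 1 - v 1 * x 0 := by simp [cross3, crossProduct]

lemma cross3_normsq (v x : EuclideanSpace ℝ (Fin 3)) :
    ‖cross3 v x‖ ^ 2 = (v 1 * x 2 - v 2 * x 1) ^ 2 + (v 2 * x 0 - v 0 * x 2) ^ 2
      + (v 0 * x 1 - v 1 * x 0) ^ 2 := by
  rw [normsq3]; simp

lemma cross3_zero_left (x : EuclideanSpace ℝ (Fin 3)) : cross3 0 x = 0 := by
  simp [cross3]

lemma rho_mul_integrable {C : Set (EuclideanSpace ℝ (Fin 3))} (hC_meas : MeasurableSet C)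
    (hC_bdd : Bornology.IsBounded C) {ρ : EuclideanSpace ℝ (Fin 3) → ℝ}
    (hρ : IntegrableOn ρ C) (P : EuclideanSpace ℝ (Fin 3) → ℝ) (hP : Continuous P) :
    IntegrableOn (fun x => ρ x * P x) C := by
  obtain ⟨M, hM⟩ := (hC_bdd.isCompact_closure).exists_bound_of_continuousOn hP.continuousOn
  apply Integrable.mono' (g := fun x => |ρ x| * M) (hρ.norm.mul_const M)
    (hρ.aestronglyMeasurable.mul hP.aestronglyMeasurable)
  filter_upwards [ae_restrict_mem hC_meas] with x hx
  calc ‖ρ x * P x‖ = |ρ x| * ‖P x‖ := by rw [norm_mul]; rfl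
  _ ≤ |ρ x| * M := mul_le_mul_of_nonneg_left (hM x (subset_closure hx)) (abs_nonneg _)

lemma gvec_apply {C : Set (EuclideanSpace ℝ (Fin 3))} (hC_meas : MeasurableSet C)
    (hC_bdd : Bornology.IsBounded C) {ρ : EuclideanSpace ℝ (Fin 3) → ℝ}
    (hρ : IntegrableOn ρ C) (i : Fin 3) :
    gvec C ρ i = ∫ x in C, ρ x * x i := by
  have hint : IntegrableOn (fun x : EuclideanSpace ℝ (Fin 3) => ρ x • x) C := by
    obtain ⟨M, hM⟩ := (hC_bdd.isCompact_closure).exists_bound_of_continuousOn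
      (continuous_norm (E := EuclideanSpace ℝ (Fin 3))).continuousOn
    apply Integrable.mono' (g := fun x => |ρ x| * M) (hρ.norm.mul_const M)
      (hρ.aestronglyMeasurable.smul
        (continuous_id.aestronglyMeasurable (f := fun x : EuclideanSpace ℝ (Fin 3) => x)))
    filter_upwards [ae_restrict_mem hC_meas] with x hx
    rw [show ‖(ρ • fun x => x) x‖ = ‖ρ x • x‖ from rfl, norm_smul]
    exact mul_le_mul_of_nonneg_left (by simpa using hM x (subset_closure hx)) (norm_nonneg _)
  have := (EuclideanSpace.proj i (𝕜 := ℝ)).integral_comp_comm hint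
  simpa [gvec] using this.symm

/-- **Theorem 3 (zero angular momentum case, algebraic form).** If the steady-state system
(3.10) holds with vanishing total angular momentum `I(ρ_s)·ω_s = 0`, then `ω_s = 0`, `ξ_s = 0`
and `ρ_s` is the constant `m_F/|C|`. -/
theorem zero_angular_momentum_case (C : Set (EuclideanSpace ℝ (Fin 3)))
    (hC_meas : MeasurableSet C) (hC_bdd : Bornology.IsBounded C)
    (hC_pos : 0 < volume C)
    (a γ : ℝ) (ha : 0 < a) (hγ : 1 < γ)
    (IC : Matrix (Fin 3) (Fin 3) ℝ) (hIC_symm : IC.IsSymm) (hIC_posdef : IC.PosDef)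
    (mB mF : ℝ) (hmB : 0 < mB) (hmF : 0 < mF) (mS : ℝ) (hmS : mS = mB + mF)
    (ρs : EuclideanSpace ℝ (Fin 3) → ℝ) (hρ_int : IntegrableOn ρs C)
    (hρ_pos : ∀ x ∈ C, 0 < ρs x) (hρ_mass : ∫ x in C, ρs x = mF)
    (ωs ξs : EuclideanSpace ℝ (Fin 3)) (c : ℝ)
    (h_i : ∀ x ∈ C, ρs x ^ (γ - 1) =
      ((γ - 1) / (2 * a * γ)) * (‖cross3 ωs x‖ ^ 2 - 2 * ⟪cross3 ωs ξs, x⟫) + c)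
    (h_ii : mS • ξs = -cross3 ωs (gvec C ρs))
    (h_iii : Imat IC C ρs mS *ᵥ ωs = 0) :
    ωs = 0 ∧ ξs = 0 ∧ ∀ x ∈ C, ρs x = mF / (volume C).toReal := by
  have hmSpos : 0 < mS := by rw [hmS]; linarith
  have hIntP := fun (P : EuclideanSpace ℝ (Fin 3) → ℝ) (hP : Continuous P) =>
    rho_mul_integrable hC_meas hC_bdd hρ_int P hP
  have hg : ∀ i, gvec C ρs i = ∫ x in C, ρs x * x i := gvec_apply hC_meas hC_bdd hρ_int
  -- Step 1: ωs = 0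
  have hω : ωs = 0 := by
    by_contra hω0
    have hIC : 0 < ωs ⬝ᵥ (IC *ᵥ ωs) := by simpa using hIC_posdef.dotProduct_mulVec_pos (x := ωs.ofLp) (by simpa using hω0)
    have hzero : ωs ⬝ᵥ (Imat IC C ρs mS *ᵥ ωs) = 0 := by rw [h_iii, dotProduct_zero]
    have hsplit : ωs ⬝ᵥ (Imat IC C ρs mS *ᵥ ωs)
        = ωs ⬝ᵥ (IC *ᵥ ωs) + ωs ⬝ᵥ (Ibar C ρs *ᵥ ωs) - ωs ⬝ᵥ (Ig C ρs mS *ᵥ ωs) := by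
      rw [Imat, Matrix.sub_mulVec, Matrix.add_mulVec, dotProduct_sub, dotProduct_add]
    -- integrability of the entry integrands
    have h9 : ∀ i j : Fin 3, IntegrableOn
        (fun x : EuclideanSpace ℝ (Fin 3) =>
          ρs x * (‖x‖ ^ 2 * (if i = j then (1 : ℝ) else 0) - x i * x j)) C :=
      fun i j => hIntP _ (by fun_prop)
    -- the quadratic form of Ibar
    have hT2 : ωs ⬝ᵥ (Ibar C ρs *ᵥ ωs)
        = ∫ x in C, ρs x * ((ωs 1 * x 2 - ωs 2 * x 1) ^ 2 + (ωs 2 * x 0 - ωs 0 * x 2) ^ 2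
            + (ωs 0 * x 1 - ωs 1 * x 0) ^ 2) := by
      have step1 : (∫ x in C, ρs x * ((ωs 1 * x 2 - ωs 2 * x 1) ^ 2
            + (ωs 2 * x 0 - ωs 0 * x 2) ^ 2 + (ωs 0 * x 1 - ωs 1 * x 0) ^ 2))
          = ∫ x in C, ∑ i, ∑ j, (ωs i * ωs j) *
              (ρs x * (‖x‖ ^ 2 * (if i = j then (1 : ℝ) else 0) - x i * x j)) := by
        apply integral_congr_ae
        filter_upwards with x
        simp only [Fin.sum_univ_three, normsq3]
        norm_num [Fin.ext_iff]
        ring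
      have step2 : (∫ x in C, ∑ i, ∑ j, (ωs i * ωs j) *
              (ρs x * (‖x‖ ^ 2 * (if i = j then (1 : ℝ) else 0) - x i * x j)))
          = ∑ i, ∑ j, (ωs i * ωs j) *
              ∫ x in C, ρs x * (‖x‖ ^ 2 * (if i = j then (1 : ℝ) else 0) - x i * x j) := by
        rw [integral_finset_sum _
          (fun i _ => integrable_finset_sum _ (fun j _ => (h9 i j).const_mul _))]
        refine Finset.sum_congr rfl fun i _ => ?_
        rw [integral_finset_sum _ (fun j _ => (h9 i j).const_mul _)]
        exact Finset.sum_congr rfl fun j _ => integral_const_mul _ _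
      rw [step1, step2]
      simp only [Ibar, dotProduct, Matrix.mulVec, Matrix.of_apply, Fin.sum_univ_three]
      ring
    -- the quadratic form of Ig
    have hT3 : ωs ⬝ᵥ (Ig C ρs mS *ᵥ ωs)
        = (1 / mS) * ((ωs 1 * gvec C ρs 2 - ωs 2 * gvec C ρs 1) ^ 2
          + (ωs 2 * gvec C ρs 0 - ωs 0 * gvec C ρs 2) ^ 2
          + (ωs 0 * gvec C ρs 1 - ωs 1 * gvec C ρs 0) ^ 2) := by
      simp only [Ig, dotProduct, Matrix.mulVec, Matrix.smul_apply, Matrix.of_apply,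
        Fin.sum_univ_three, normsq3, smul_eq_mul]
      norm_num [Fin.ext_iff]
      ring
    -- abbreviations for the "shifted" integral
    set g0 := gvec C ρs 0
    set g1 := gvec C ρs 1
    set g2 := gvec C ρs 2
    set u0 := (ωs 1 * g2 - ωs 2 * g1) / mS with hu0
    set u1 := (ωs 2 * g0 - ωs 0 * g2) / mS with hu1
    set u2 := (ωs 0 * g1 - ωs 1 * g0) / mS with hu2
    have hs0 : 0 ≤ ∫ x in C, ρs x * ((ωs 1 * x 2 - ωs 2 * x 1 - u0) ^ 2
        + (ωs 2 * x 0 - ωs 0 * x 2 - u1) ^ 2 + (ωs 0 * x 1 - ωs 1 * x 0 - u2) ^ 2) := by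
      apply setIntegral_nonneg hC_meas
      intro x hx
      exact mul_nonneg (hρ_pos x hx).le (by positivity)
    -- expand the shifted integral
    have hiQ : IntegrableOn (fun x : EuclideanSpace ℝ (Fin 3) =>
        ρs x * ((ωs 1 * x 2 - ωs 2 * x 1) ^ 2 + (ωs 2 * x 0 - ωs 0 * x 2) ^ 2
          + (ωs 0 * x 1 - ωs 1 * x 0) ^ 2)) C := hIntP _ (by fun_prop)
    have hix : ∀ k : Fin 3, IntegrableOn (fun x : EuclideanSpace ℝ (Fin 3) => ρs x * x k) C :=
      fun k => hIntP _ (by fun_prop)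
    have hi0 : IntegrableOn (fun x : EuclideanSpace ℝ (Fin 3) =>
        (2 * (u1 * ωs 2 - u2 * ωs 1)) * (ρs x * x 0)) C := (hix 0).const_mul _
    have hi1 : IntegrableOn (fun x : EuclideanSpace ℝ (Fin 3) =>
        (2 * (u2 * ωs 0 - u0 * ωs 2)) * (ρs x * x 1)) C := (hix 1).const_mul _
    have hi2 : IntegrableOn (fun x : EuclideanSpace ℝ (Fin 3) =>
        (2 * (u0 * ωs 1 - u1 * ωs 0)) * (ρs x * x 2)) C := (hix 2).const_mul _
    have hiρ : IntegrableOn (fun x : EuclideanSpace ℝ (Fin 3) =>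
        (u0 ^ 2 + u1 ^ 2 + u2 ^ 2) * ρs x) C := hρ_int.const_mul _
    have hs_eq : (∫ x in C, ρs x * ((ωs 1 * x 2 - ωs 2 * x 1 - u0) ^ 2
          + (ωs 2 * x 0 - ωs 0 * x 2 - u1) ^ 2 + (ωs 0 * x 1 - ωs 1 * x 0 - u2) ^ 2))
        = (∫ x in C, ρs x * ((ωs 1 * x 2 - ωs 2 * x 1) ^ 2 + (ωs 2 * x 0 - ωs 0 * x 2) ^ 2
            + (ωs 0 * x 1 - ωs 1 * x 0) ^ 2))
          - (2 * (u1 * ωs 2 - u2 * ωs 1)) * g0 - (2 * (u2 * ωs 0 - u0 * ωs 2)) * g1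
          - (2 * (u0 * ωs 1 - u1 * ωs 0)) * g2 + (u0 ^ 2 + u1 ^ 2 + u2 ^ 2) * mF := by
      have hpt : (∫ x in C, ρs x * ((ωs 1 * x 2 - ωs 2 * x 1 - u0) ^ 2
            + (ωs 2 * x 0 - ωs 0 * x 2 - u1) ^ 2 + (ωs 0 * x 1 - ωs 1 * x 0 - u2) ^ 2))
          = ∫ x in C, (ρs x * ((ωs 1 * x 2 - ωs 2 * x 1) ^ 2 + (ωs 2 * x 0 - ωs 0 * x 2) ^ 2
              + (ωs 0 * x 1 - ωs 1 * x 0) ^ 2)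
            - (2 * (u1 * ωs 2 - u2 * ωs 1)) * (ρs x * x 0)
            - (2 * (u2 * ωs 0 - u0 * ωs 2)) * (ρs x * x 1)
            - (2 * (u0 * ωs 1 - u1 * ωs 0)) * (ρs x * x 2)
            + (u0 ^ 2 + u1 ^ 2 + u2 ^ 2) * ρs x) := by
        apply integral_congr_ae
        filter_upwards with x
        ring
      have e1 : IntegrableOn (fun x : EuclideanSpace ℝ (Fin 3) =>
          ρs x * ((ωs 1 * x 2 - ωs 2 * x 1) ^ 2 + (ωs 2 * x 0 - ωs 0 * x 2) ^ 2
            + (ωs 0 * x 1 - ωs 1 * x 0) ^ 2)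
          - (2 * (u1 * ωs 2 - u2 * ωs 1)) * (ρs x * x 0)) C := hiQ.sub hi0
      have e2 : IntegrableOn (fun x : EuclideanSpace ℝ (Fin 3) =>
          ρs x * ((ωs 1 * x 2 - ωs 2 * x 1) ^ 2 + (ωs 2 * x 0 - ωs 0 * x 2) ^ 2
            + (ωs 0 * x 1 - ωs 1 * x 0) ^ 2)
          - (2 * (u1 * ωs 2 - u2 * ωs 1)) * (ρs x * x 0)
          - (2 * (u2 * ωs 0 - u0 * ωs 2)) * (ρs x * x 1)) C := e1.sub hi1
      have e3 : IntegrableOn (fun x : EuclideanSpace ℝ (Fin 3) =>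
          ρs x * ((ωs 1 * x 2 - ωs 2 * x 1) ^ 2 + (ωs 2 * x 0 - ωs 0 * x 2) ^ 2
            + (ωs 0 * x 1 - ωs 1 * x 0) ^ 2)
          - (2 * (u1 * ωs 2 - u2 * ωs 1)) * (ρs x * x 0)
          - (2 * (u2 * ωs 0 - u0 * ωs 2)) * (ρs x * x 1)
          - (2 * (u0 * ωs 1 - u1 * ωs 0)) * (ρs x * x 2)) C := e2.sub hi2
      rw [hpt, integral_add e3 hiρ, integral_sub e2 hi2, integral_sub e1 hi1,
        integral_sub hiQ hi0, integral_const_mul, integral_const_mul, integral_const_mul,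
        integral_const_mul, hρ_mass, ← hg 0, ← hg 1, ← hg 2]
    -- the key inequality
    have hW0 : 0 ≤ (ωs 1 * g2 - ωs 2 * g1) ^ 2 + (ωs 2 * g0 - ωs 0 * g2) ^ 2
        + (ωs 0 * g1 - ωs 1 * g0) ^ 2 := by positivity
    have halg : - (2 * (u1 * ωs 2 - u2 * ωs 1)) * g0 - (2 * (u2 * ωs 0 - u0 * ωs 2)) * g1
          - (2 * (u0 * ωs 1 - u1 * ωs 0)) * g2 + (u0 ^ 2 + u1 ^ 2 + u2 ^ 2) * mF
        = - (1 / mS) * ((ωs 1 * g2 - ωs 2 * g1) ^ 2 + (ωs 2 * g0 - ωs 0 * g2) ^ 2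
            + (ωs 0 * g1 - ωs 1 * g0) ^ 2)
          - (mB / mS ^ 2) * ((ωs 1 * g2 - ωs 2 * g1) ^ 2 + (ωs 2 * g0 - ωs 0 * g2) ^ 2
            + (ωs 0 * g1 - ωs 1 * g0) ^ 2) := by
      rw [hu0, hu1, hu2, hmS]
      have h : mB + mF ≠ 0 := by linarith
      field_simp
      ring
    have hmW : 0 ≤ (mB / mS ^ 2) * ((ωs 1 * g2 - ωs 2 * g1) ^ 2
        + (ωs 2 * g0 - ωs 0 * g2) ^ 2 + (ωs 0 * g1 - ωs 1 * g0) ^ 2) :=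
      mul_nonneg (div_nonneg hmB.le (sq_nonneg mS)) hW0
    rw [hsplit, hT2, hT3] at hzero
    linarith [hs_eq, hs0]
  -- Step 2: ξs = 0
  have hξ : ξs = 0 := by
    rw [hω, cross3_zero_left, neg_zero] at h_ii
    have := h_ii
    rwa [smul_eq_zero, or_iff_right hmSpos.ne'] at this
  -- Step 3: ρs is constant
  refine ⟨hω, hξ, ?_⟩
  have hconst : ∀ x ∈ C, ρs x ^ (γ - 1) = c := by
    intro x hx
    rw [h_i x hx, hω, cross3_zero_left, cross3_zero_left]
    simp
  have hγ1 : γ - 1 ≠ 0 := by linarith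
  have hval : ∀ x ∈ C, ρs x = c ^ (γ - 1)⁻¹ := by
    intro x hx
    rw [← hconst x hx, ← Real.rpow_mul (hρ_pos x hx).le, mul_inv_cancel₀ hγ1, Real.rpow_one]
  have hvolfin : volume C < ⊤ := hC_bdd.measure_lt_top
  have hvol : 0 < (volume C).toReal := ENNReal.toReal_pos hC_pos.ne' hvolfin.ne
  have hint : (∫ x in C, ρs x) = (volume C).toReal * c ^ (γ - 1)⁻¹ := by
    rw [setIntegral_congr_fun hC_meas hval, setIntegral_const, smul_eq_mul, measureReal_def]
  intro x hx
  rw [hval x hx]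
  rw [hρ_mass] at hint
  rw [hint]
  field_simp
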